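/- arXiv:1205.0772 — 5 statements merged into one kernel-verified Lean document; each statement's English description precedes it below -/
import Mathlib

section
/- Let K be a field and S = K[t_1,...,t_s]. If a, b, α_1,...,α_r, β_1,...,β_r are vectors in ℕ^s and a - b lies in the subgroup of ℤ^s generated by α_1 - β_1, ..., α_r - β_r, then there exists a monomial t^δ (δ ∈ ℕ^s) such that t^δ·(t^a - t^b) belongs to the ideal of S generated by the binomials t^{α_1} - t^{β_1}, ..., t^{α_r} - t^{β_r}. -/
open MvPolynomial

noncomputable section

/-- View a function `Fin s → ℕ` as a finitely supported function (an exponent vector). -/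
abbrev toFs {s : ℕ} (a : Fin s → ℕ) : Fin s →₀ ℕ := Finsupp.equivFunOnFinite.symm a

/-- The coercion of an exponent vector to `ℤ`. -/
abbrev intVec {s : ℕ} (a : Fin s → ℕ) : Fin s → ℤ := fun i => (a i : ℤ)

/-- The lattice ideal `I(𝓛)` of a lattice `𝓛 ⊆ ℤ^s`, generated by the binomials
`t^{a⁺} - t^{a⁻}` for `a ∈ 𝓛`. -/
def latticeIdeal {s : ℕ} (K : Type*) [Field K] (𝓛 : AddSubgroup (Fin s → ℤ)) :
    Ideal (MvPolynomial (Fin s) K) :=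
  Ideal.span {f | ∃ a ∈ 𝓛,
    f = monomial (toFs fun i => (a i).toNat) (1 : K) - monomial (toFs fun i => (-a i).toNat) 1}

/-- A binomial `t^a - t^b`. -/
def IsBinomial {s : ℕ} {K : Type*} [Field K] (f : MvPolynomial (Fin s) K) : Prop :=
  ∃ a b : Fin s → ℕ, f = monomial (toFs a) (1 : K) - monomial (toFs b) 1

/-- The affine zero set `V(I) ⊆ 𝔸_K^s` of an ideal of `K[t_1, …, t_s]`. -/
def zeroSet {s : ℕ} {K : Type*} [Field K] (I : Ideal (MvPolynomial (Fin s) K)) :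
    Set (Fin s → K) := {x | ∀ f ∈ I, eval x f = 0}

/-- The height of an ideal: the infimum of the heights of the primes containing it. -/
def idealHeight {R : Type*} [CommRing R] (I : Ideal R) : ℕ∞ :=
  ⨅ p ∈ {p : PrimeSpectrum R | I ≤ p.asIdeal}, Order.height p

lemma toFs_add {s : ℕ} (a b : Fin s → ℕ) :
    toFs (fun i => a i + b i) = toFs a + toFs b := by
  ext i; simp [toFs]

lemma muldiff {s : ℕ} {K : Type*} [Field K] (δ A B : Fin s → ℕ) :
    monomial (toFs δ) (1 : K) * (monomial (toFs A) 1 - monomial (toFs B) 1)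
      = monomial (toFs fun i => δ i + A i) (1 : K)
        - monomial (toFs fun i => δ i + B i) 1 := by
  rw [mul_sub, monomial_mul, monomial_mul, toFs_add, toFs_add, one_mul]

theorem binomial_multiple_in_span {s r : ℕ} (K : Type*) [Field K]
    (a b : Fin s → ℕ) (α β : Fin r → Fin s → ℕ)
    (h : intVec a - intVec b ∈ AddSubgroup.closure (Set.range fun j => intVec (α j) - intVec (β j))) :
    ∃ δ : Fin s → ℕ,
      monomial (toFs δ) (1 : K) * (monomial (toFs a) 1 - monomial (toFs b) 1) ∈
        Ideal.span (Set.range fun j =>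
          monomial (toFs (α j)) (1 : K) - monomial (toFs (β j)) 1) := by
  set I := Ideal.span (Set.range fun j =>
      monomial (toFs (α j)) (1 : K) - monomial (toFs (β j)) 1) with hI
  suffices H : ∀ v ∈ AddSubgroup.closure (Set.range fun j => intVec (α j) - intVec (β j)),
      ∀ A B : Fin s → ℕ, intVec A - intVec B = v →
      ∃ δ : Fin s → ℕ,
        monomial (toFs δ) (1 : K) * (monomial (toFs A) 1 - monomial (toFs B) 1) ∈ I by
    exact H _ h a b rfl
  intro v hv
  induction hv using AddSubgroup.closure_induction with
  | mem x hx =>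
    obtain ⟨j, rfl⟩ := hx
    intro A B hAB
    have hfun : (fun i => β j i + A i) = fun i => B i + α j i := by
      funext i
      have := congrFun hAB i
      simp only [Pi.sub_apply, intVec] at this
      omega
    refine ⟨β j, ?_⟩
    rw [muldiff, hfun]
    have : monomial (toFs fun i => B i + α j i) (1 : K)
        - monomial (toFs fun i => β j i + B i) 1
        = monomial (toFs B) 1 * (monomial (toFs (α j)) (1 : K) - monomial (toFs (β j)) 1) := by
      rw [muldiff, show (fun i => B i + β j i) = (fun i => β j i + B i) by
        funext i; omega]
    rw [this]
    exact Ideal.mul_mem_left _ _ (Ideal.subset_span ⟨j, rfl⟩)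
  | zero =>
    intro A B hAB
    have : A = B := by
      funext i
      have := congrFun hAB i
      simp only [Pi.sub_apply, Pi.zero_apply, intVec] at this
      omega
    refine ⟨0, ?_⟩
    rw [this, sub_self, mul_zero]
    exact I.zero_mem
  | neg x hx ih =>
    intro A B hAB
    obtain ⟨δ, hδ⟩ := ih B A (by rw [← neg_sub, hAB, neg_neg])
    refine ⟨δ, ?_⟩
    have : monomial (toFs δ) (1 : K) * (monomial (toFs A) 1 - monomial (toFs B) 1)
        = -(monomial (toFs δ) (1 : K) * (monomial (toFs B) 1 - monomial (toFs A) 1)) := by ring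
    rw [this]
    exact I.neg_mem hδ
  | add x y hx hy ihx ihy =>
    intro A B hAB
    set C : Fin s → ℕ := fun i => A i + (-(x i)).toNat with hC
    set A' : Fin s → ℕ := fun i => A i + (x i).toNat with hA'
    set B' : Fin s → ℕ := fun i => B i + (x i).toNat with hB'
    obtain ⟨δ₁, hδ₁⟩ := ihx A' C (by
      funext i; simp only [Pi.sub_apply, intVec, hA', hC]; omega)
    obtain ⟨δ₂, hδ₂⟩ := ihy C B' (by
      funext i
      have := congrFun hAB i
      simp only [Pi.sub_apply, Pi.add_apply, intVec, hC, hB'] at this ⊢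
      omega)
    refine ⟨fun i => δ₁ i + δ₂ i + (x i).toNat, ?_⟩
    have key : monomial (toFs fun i => δ₁ i + δ₂ i + (x i).toNat) (1 : K)
          * (monomial (toFs A) 1 - monomial (toFs B) 1)
        = monomial (toFs δ₂) 1 * (monomial (toFs δ₁) (1 : K)
            * (monomial (toFs A') 1 - monomial (toFs C) 1))
          + monomial (toFs δ₁) 1 * (monomial (toFs δ₂) (1 : K)
            * (monomial (toFs C) 1 - monomial (toFs B') 1)) := by
      rw [muldiff, muldiff, muldiff, muldiff, muldiff]
      rw [show (fun i => δ₂ i + (δ₁ i + A' i)) = fun i => δ₁ i + δ₂ i + (x i).toNat + A i by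
        funext i; simp [hA']; ring]
      rw [show (fun i => δ₂ i + (δ₁ i + C i)) = fun i => δ₁ i + (δ₂ i + C i) by
        funext i; ring]
      rw [show (fun i => δ₁ i + (δ₂ i + B' i)) = fun i => δ₁ i + δ₂ i + (x i).toNat + B i by
        funext i; simp [hB']; ring]
      ring
    rw [key]
    exact I.add_mem (Ideal.mul_mem_left _ _ hδ₁) (Ideal.mul_mem_left _ _ hδ₂)
end
end

section
/- Let L ⊂ S be a binomial ideal. Then L is a lattice ideal (i.e., L = I(𝓛) for some lattice 𝓛 ⊂ ℤ^s) if and only if each variable t_i is a non-zerodivisor on the quotient ring S/L. -/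
open MvPolynomial

noncomputable section

namespace Lat
variable {s : ℕ} {K : Type*} [Field K]

lemma toFs_apply (a : Fin s → ℕ) (i : Fin s) : toFs a i = a i := rfl

lemma toFs_add (a b : Fin s → ℕ) : toFs a + toFs b = toFs (fun i => a i + b i) := by
  ext i; simp [toFs_apply, Finsupp.add_apply]

lemma toFs_coe (d : Fin s →₀ ℕ) : toFs (⇑d) = d := Finsupp.equivFunOnFinite_symm_coe d

/-- The binomial `t^{a⁺} - t^{a⁻}` attached to an integer vector `a`. -/
def Bin (K : Type*) [Field K] {s : ℕ} (a : Fin s → ℤ) : MvPolynomial (Fin s) K :=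
  monomial (toFs fun i => (a i).toNat) (1 : K) - monomial (toFs fun i => (-a i).toNat) 1

lemma factor (a b : Fin s → ℕ) :
    monomial (toFs a) (1 : K) - monomial (toFs b) 1 =
      monomial (toFs fun i => min (a i) (b i)) 1 *
        Bin K (fun i => (a i : ℤ) - b i) := by
  rw [Bin, mul_sub, monomial_mul, monomial_mul, mul_one, toFs_add, toFs_add]
  congr 2 <;> · refine congrArg _ ?_; ext i; simp only [toFs_apply]; omega

section Nzd
variable {L : Ideal (MvPolynomial (Fin s) K)}
  (H : ∀ (i : Fin s) (f : MvPolynomial (Fin s) K), X i * f ∈ L → f ∈ L)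

include H

lemma pow_nzd (i : Fin s) : ∀ (n : ℕ) (f : MvPolynomial (Fin s) K),
    X i ^ n * f ∈ L → f ∈ L := by
  intro n
  induction n with
  | zero => intro f hf; simpa using hf
  | succ n ih =>
    intro f hf
    have : X i ^ n * (X i * f) ∈ L := by rw [← mul_assoc, ← pow_succ]; exact hf
    exact H i f (ih _ this)

lemma mono_nzd : ∀ (m : Fin s →₀ ℕ) (f : MvPolynomial (Fin s) K),
    monomial m (1 : K) * f ∈ L → f ∈ L := by
  intro m
  induction m using Finsupp.induction with
  | zero => intro f hf; simpa using hf
  | single_add a n m' _ _ ih =>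
    intro f hf
    have h1 : monomial (Finsupp.single a n + m') (1 : K) = X a ^ n * monomial m' 1 := by
      rw [X_pow_eq_monomial, monomial_mul, one_mul]
    rw [h1, mul_assoc] at hf
    exact ih f (pow_nzd H a n _ hf)

lemma bin_add {a b : Fin s → ℤ} (ha : Bin K a ∈ L) (hb : Bin K b ∈ L) :
    Bin K (a + b) ∈ L := by
  have key : monomial (toFs fun i => (a i).toNat + (b i).toNat - (a i + b i).toNat) (1 : K) *
      Bin K (a + b) =
      monomial (toFs fun i => (a i).toNat) 1 * Bin K b +
        monomial (toFs fun i => (-b i).toNat) 1 * Bin K a := by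
    simp only [Bin, mul_sub, monomial_mul, mul_one, toFs_add, Pi.add_apply]
    have e1 : (toFs fun i => ((a i).toNat + (b i).toNat - (a i + b i).toNat) + (a i + b i).toNat)
        = toFs fun i => (a i).toNat + (b i).toNat := by
      ext i; simp only [toFs_apply]; omega
    have e2 : (toFs fun i => ((a i).toNat + (b i).toNat - (a i + b i).toNat) + (-(a i + b i)).toNat)
        = toFs fun i => (-b i).toNat + (-a i).toNat := by
      ext i; simp only [toFs_apply]; omega
    have e3 : (toFs fun i => (a i).toNat + (-b i).toNat)
        = toFs fun i => (-b i).toNat + (a i).toNat := by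
      ext i; simp only [toFs_apply]; omega
    rw [e1, e2, e3]; ring
  have hmem : monomial (toFs fun i => (a i).toNat + (b i).toNat - (a i + b i).toNat) (1 : K) *
      Bin K (a + b) ∈ L := by
    rw [key]; exact add_mem (Ideal.mul_mem_left _ _ hb) (Ideal.mul_mem_left _ _ ha)
  exact mono_nzd H _ _ hmem

omit H in
lemma bin_zero : Bin K (0 : Fin s → ℤ) = 0 := by simp [Bin]

omit H in
lemma bin_neg (a : Fin s → ℤ) : Bin K (-a) = -Bin K a := by
  simp only [Bin, Pi.neg_apply, neg_neg, neg_sub]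

end Nzd

/-- The map on exponents to the quotient group. -/
def Pem (𝓛 : AddSubgroup (Fin s → ℤ)) : (Fin s →₀ ℕ) →+ ((Fin s → ℤ) ⧸ 𝓛) :=
  AddMonoidHom.mk' (fun d => QuotientAddGroup.mk (fun i => (d i : ℤ))) (by
    intro x y
    rw [← QuotientAddGroup.mk_add]
    congr 1)

/-- The monomial map to the group algebra of the quotient group. -/
def Phi (K : Type*) [Field K] {s : ℕ} (𝓛 : AddSubgroup (Fin s → ℤ)) :
    MvPolynomial (Fin s) K → AddMonoidAlgebra K ((Fin s → ℤ) ⧸ 𝓛) :=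
  AddMonoidAlgebra.mapDomain (Pem 𝓛)

variable (𝓛 : AddSubgroup (Fin s → ℤ))

lemma Phi_monomial (d : Fin s →₀ ℕ) (c : K) :
    Phi K 𝓛 (monomial d c) = AddMonoidAlgebra.single (Pem 𝓛 d) c := by
  rw [Phi, ← single_eq_monomial]
  exact AddMonoidAlgebra.mapDomain_single

lemma Phi_sub (f g : MvPolynomial (Fin s) K) :
    Phi K 𝓛 (f - g) = Phi K 𝓛 f - Phi K 𝓛 g :=
  by
    have := AddMonoidAlgebra.mapDomain_add (R := K) (Pem 𝓛) (f - g) g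
    rw [sub_add_cancel] at this
    unfold Phi; rw [this, add_sub_cancel_right]

lemma Phi_mul (f g : MvPolynomial (Fin s) K) :
    Phi K 𝓛 (f * g) = Phi K 𝓛 f * Phi K 𝓛 g :=
  AddMonoidAlgebra.mapDomain_mul (Pem 𝓛) f g

/-- If two exponent vectors have the same image in the quotient group, then the
difference of the corresponding monomials lies in the lattice ideal. -/
lemma binom_mem {a b : Fin s →₀ ℕ} (h : Pem 𝓛 a = Pem 𝓛 b) :
    monomial a (1 : K) - monomial b 1 ∈ latticeIdeal K 𝓛 := by
  have hc : (fun i => (a i : ℤ) - b i) ∈ 𝓛 := by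
    have h' : QuotientAddGroup.mk (s := 𝓛) (fun i => (a i : ℤ)) =
        QuotientAddGroup.mk (fun i => (b i : ℤ)) := h
    rw [QuotientAddGroup.eq] at h'
    have : (-fun i => (a i : ℤ)) + (fun i => (b i : ℤ)) = -(fun i => (a i : ℤ) - b i) := by
      funext i; simp; ring
    rw [this] at h'
    exact (neg_mem_iff).1 h'
  have hgen : (monomial (toFs fun i => ((a i : ℤ) - b i).toNat) (1 : K)
      - monomial (toFs fun i => (-((a i : ℤ) - b i)).toNat) 1) ∈ latticeIdeal K 𝓛 :=
    Ideal.subset_span ⟨_, hc, rfl⟩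
  have hfac : monomial a (1 : K) - monomial b 1 =
      monomial (toFs fun i => min (a i) (b i)) 1 *
        (monomial (toFs fun i => ((a i : ℤ) - b i).toNat) (1 : K)
          - monomial (toFs fun i => (-((a i : ℤ) - b i)).toNat) 1) := by
    rw [mul_sub, monomial_mul, monomial_mul, mul_one]
    nth_rewrite 1 [← toFs_coe a]
    nth_rewrite 1 [← toFs_coe b]
    congr 2 <;> · refine congrArg _ ?_; ext i; simp only [toFs_apply, Finsupp.add_apply]; omega
  rw [hfac]
  exact Ideal.mul_mem_left _ _ hgen

/-- The lattice ideal lies in the kernel of `Phi`. -/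
lemma Phi_eq_zero_of_mem {f : MvPolynomial (Fin s) K} (hf : f ∈ latticeIdeal K 𝓛) :
    Phi K 𝓛 f = 0 := by
  refine Submodule.span_induction ?_ ?_ ?_ ?_ hf
  · rintro g ⟨a, ha, rfl⟩
    rw [Phi_sub, Phi_monomial, Phi_monomial]
    have : Pem 𝓛 (toFs fun i => (a i).toNat) = Pem 𝓛 (toFs fun i => (-a i).toNat) := by
      show QuotientAddGroup.mk _ = QuotientAddGroup.mk _
      rw [QuotientAddGroup.eq]
      have : (-fun i => ((toFs fun i => (a i).toNat) i : ℤ)) +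
          (fun i => ((toFs fun i => (-a i).toNat) i : ℤ)) = -a := by
        funext i; simp only [toFs_apply, Pi.add_apply, Pi.neg_apply]; omega
      rw [this]
      exact neg_mem ha
    rw [this, sub_self]
  · exact AddMonoidAlgebra.mapDomain_zero _
  · intro x y _ _ hx hy
    rw [show Phi K 𝓛 (x + y) = Phi K 𝓛 x + Phi K 𝓛 y from AddMonoidAlgebra.mapDomain_add _ _ _, hx, hy, add_zero]
  · intro r x _ hx
    rw [smul_eq_mul, Phi_mul, hx, mul_zero]

/-- The kernel of `Phi` is contained in the lattice ideal. -/
lemma mem_of_Phi_eq_zero : ∀ (n : ℕ) (f : MvPolynomial (Fin s) K), f.support.card ≤ n →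
    Phi K 𝓛 f = 0 → f ∈ latticeIdeal K 𝓛 := by
  intro n
  induction n with
  | zero =>
    intro f hcard _
    have : f = 0 := by
      rw [← support_eq_empty, ← Finset.card_eq_zero]; omega
    rw [this]; exact Ideal.zero_mem _
  | succ n ih =>
    intro f hcard hker
    classical
    rcases eq_or_ne f 0 with rfl | hf0
    · exact Ideal.zero_mem _
    obtain ⟨a, ha⟩ := Finset.nonempty_iff_ne_empty.2 (fun h => hf0 (support_eq_empty.1 h))
    set c := coeff a f with hc
    have hca : c ≠ 0 := mem_support_iff.1 ha
    have hfiber : ∑ d ∈ f.support.filter (fun d => Pem 𝓛 d = Pem 𝓛 a), coeff d f = 0 := by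
      have h1 : (Phi K 𝓛 f).coeff (Pem 𝓛 a) = 0 := by rw [hker]; rfl
      change (Finsupp.mapDomain (Pem 𝓛) (AddMonoidAlgebra.coeff f)) (Pem 𝓛 a) = 0 at h1
      rw [Finsupp.mapDomain, Finsupp.sum_apply] at h1
      rw [← h1, Finsupp.sum, Finset.sum_filter]
      refine Finset.sum_congr rfl ?_
      intro d _
      rw [Finsupp.single_apply]
      split <;> simp_all [coeff]
    have hex : ∃ b ∈ f.support, b ≠ a ∧ Pem 𝓛 b = Pem 𝓛 a := by
      by_contra hno
      push_neg at hno
      have : f.support.filter (fun d => Pem 𝓛 d = Pem 𝓛 a) = {a} := by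
        apply Finset.Subset.antisymm
        · intro d hd
          rw [Finset.mem_filter] at hd
          rcases eq_or_ne d a with rfl | hda
          · simp
          · exact absurd (hno d hd.1 hda) (by simpa using hd.2)
        · intro d hd
          rw [Finset.mem_singleton] at hd
          subst hd
          exact Finset.mem_filter.2 ⟨ha, rfl⟩
      rw [this, Finset.sum_singleton] at hfiber
      exact hca hfiber
    obtain ⟨b, hbs, hba, hbp⟩ := hex
    set g := f - (monomial a c - monomial b c) with hg
    have hgker : Phi K 𝓛 g = 0 := by
      rw [hg, Phi_sub, Phi_sub, Phi_monomial, Phi_monomial, hbp, hker, sub_self, sub_zero]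
    have hgsupp : g.support ⊆ f.support.erase a := by
      intro d hd
      rw [mem_support_iff] at hd
      rw [hg] at hd
      simp only [coeff_sub, coeff_monomial] at hd
      rcases eq_or_ne d a with rfl | hda
      · exfalso
        apply hd
        rw [if_pos rfl, if_neg (by exact fun h => hba h)]
        simp [hc]
      · rw [Finset.mem_erase]
        refine ⟨hda, mem_support_iff.2 ?_⟩
        intro hdf
        apply hd
        rw [hdf, if_neg (fun h => hda h.symm)]
        rcases eq_or_ne b d with rfl | hbd
        · exact absurd hdf (mem_support_iff.1 hbs)
        · rw [if_neg hbd]; ring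
    have hgcard : g.support.card ≤ n := by
      have := Finset.card_le_card hgsupp
      rw [Finset.card_erase_of_mem ha] at this
      omega
    have hgmem : g ∈ latticeIdeal K 𝓛 := ih g hgcard hgker
    have hbin : monomial a c - monomial b c ∈ latticeIdeal K 𝓛 := by
      have : monomial a c - monomial b c = C c * (monomial a 1 - monomial b 1) := by
        rw [mul_sub, C_mul_monomial, C_mul_monomial, mul_one]
      rw [this]
      exact Ideal.mul_mem_left _ _ (binom_mem 𝓛 hbp.symm)
    have : f = g + (monomial a c - monomial b c) := by rw [hg]; ring
    rw [this]
    exact Ideal.add_mem _ hgmem hbin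

lemma single_unit_cancel {Q : Type*} [AddCommGroup Q] (q : Q)
    (x : AddMonoidAlgebra K Q) (h : AddMonoidAlgebra.single q (1 : K) * x = 0) : x = 0 := by
  have h2 := congrArg (fun y => AddMonoidAlgebra.single (-q) (1 : K) * y) h
  simp only [← mul_assoc, AddMonoidAlgebra.single_mul_single, one_mul, mul_zero,
    neg_add_cancel] at h2
  rwa [← AddMonoidAlgebra.one_def, one_mul] at h2

theorem forward (i : Fin s) (f : MvPolynomial (Fin s) K)
    (hf : X i * f ∈ latticeIdeal K 𝓛) : f ∈ latticeIdeal K 𝓛 := by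
  have h1 : Phi K 𝓛 (X i * f) = 0 := Phi_eq_zero_of_mem 𝓛 hf
  rw [Phi_mul] at h1
  have hX : Phi K 𝓛 (X i) = AddMonoidAlgebra.single (Pem 𝓛 (Finsupp.single i 1)) 1 := by
    rw [show (X i : MvPolynomial (Fin s) K) = monomial (Finsupp.single i 1) 1 from rfl,
      Phi_monomial]
  rw [hX] at h1
  exact mem_of_Phi_eq_zero 𝓛 f.support.card f le_rfl (single_unit_cancel _ _ h1)

end Lat

theorem lattice_ideal_iff_variables_nonzerodivisors {s : ℕ} {K : Type*} [Field K]
    (L : Ideal (MvPolynomial (Fin s) K)) (G : Set (MvPolynomial (Fin s) K))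
    (hG : ∀ g ∈ G, IsBinomial g) (hL : L = Ideal.span G) :
    (∃ 𝓛 : AddSubgroup (Fin s → ℤ), L = latticeIdeal K 𝓛) ↔
      ∀ (i : Fin s) (f : MvPolynomial (Fin s) K), X i * f ∈ L → f ∈ L := by
  constructor
  · rintro ⟨𝓛, rfl⟩ i f hf
    exact Lat.forward 𝓛 i f hf
  · intro H
    refine ⟨{ carrier := {a | Lat.Bin K a ∈ L},
              add_mem' := fun ha hb => Lat.bin_add H ha hb,
              zero_mem' := by simp only [Set.mem_setOf_eq, Lat.bin_zero]; exact L.zero_mem,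
              neg_mem' := by
                intro a ha
                simp only [Set.mem_setOf_eq, Lat.bin_neg] at *
                exact neg_mem ha }, ?_⟩
    apply le_antisymm
    · -- L ≤ latticeIdeal
      conv_lhs => rw [hL]
      rw [Ideal.span_le]
      intro g hg
      obtain ⟨a, b, rfl⟩ := hG g hg
      have hgL : monomial (toFs a) (1 : K) - monomial (toFs b) 1 ∈ L := by
        rw [hL]; exact Ideal.subset_span hg
      rw [Lat.factor] at hgL ⊢
      have hBinL : Lat.Bin K (fun i => (a i : ℤ) - b i) ∈ L := Lat.mono_nzd H _ _ hgL
      exact Ideal.mul_mem_left _ _ (Ideal.subset_span ⟨_, hBinL, rfl⟩)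
    · -- latticeIdeal ≤ L
      rw [latticeIdeal, Ideal.span_le]
      rintro g ⟨a, ha, rfl⟩
      exact ha
end
end

section
/- Let I ⊂ S be a binomial ideal generated by binomials g_1, ..., g_r, and let 𝒢 ⊂ ℤ^s be the subgroup generated by ĝ_1, ..., ĝ_r (where for g = t^a - t^b, ĝ = a - b). If f is a nonzero polynomial in I, then every simple component of f with respect to the equivalence relation ∼_𝒢 belongs to I. -/
open MvPolynomial

noncomputable section

/-- The simple component of `f` with respect to `∼_𝒢` containing the monomial `t^{a₀}`:
the sum of all terms of `f` whose exponent is equivalent to `a₀` modulo `𝒢`. -/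
def simpleComponent {s : ℕ} {K : Type*} [Field K] (𝒢 : AddSubgroup (Fin s → ℤ))
    (f : MvPolynomial (Fin s) K) (a₀ : Fin s →₀ ℕ) : MvPolynomial (Fin s) K :=
  open Classical in
  (f.support.filter fun a => ((fun i => (a i : ℤ)) - fun i => (a₀ i : ℤ)) ∈ 𝒢).sum
    fun a => monomial a (coeff a f)

open Classical in
lemma coeff_simpleComponent {s : ℕ} {K : Type*} [Field K] (𝒢 : AddSubgroup (Fin s → ℤ))
    (f : MvPolynomial (Fin s) K) (a₀ m : Fin s →₀ ℕ) :
    coeff m (simpleComponent 𝒢 f a₀) =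
      if ((fun i => (m i : ℤ)) - fun i => (a₀ i : ℤ)) ∈ 𝒢 then coeff m f else 0 := by
  classical
  unfold simpleComponent
  rw [coeff_sum]
  simp only [coeff_monomial]
  rw [Finset.sum_ite_eq' ]
  by_cases hP : ((fun i => (m i : ℤ)) - fun i => (a₀ i : ℤ)) ∈ 𝒢
  · by_cases hm : m ∈ f.support
    · simp [hP, hm]
    · simp [hP, hm, MvPolynomial.notMem_support_iff.mp hm]
  · simp [hP]

lemma simpleComponent_add {s : ℕ} {K : Type*} [Field K] (𝒢 : AddSubgroup (Fin s → ℤ))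
    (f g : MvPolynomial (Fin s) K) (a₀ : Fin s →₀ ℕ) :
    simpleComponent 𝒢 (f + g) a₀ = simpleComponent 𝒢 f a₀ + simpleComponent 𝒢 g a₀ := by
  apply MvPolynomial.ext; intro m
  simp only [coeff_simpleComponent, coeff_add]
  split <;> simp

lemma simpleComponent_zero {s : ℕ} {K : Type*} [Field K] (𝒢 : AddSubgroup (Fin s → ℤ))
    (a₀ : Fin s →₀ ℕ) : simpleComponent 𝒢 (0 : MvPolynomial (Fin s) K) a₀ = 0 := by
  apply MvPolynomial.ext; intro m
  simp [coeff_simpleComponent]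

lemma simpleComponent_sum {s : ℕ} {K : Type*} [Field K] (𝒢 : AddSubgroup (Fin s → ℤ))
    {ι : Type*} (t : Finset ι) (F : ι → MvPolynomial (Fin s) K) (a₀ : Fin s →₀ ℕ) :
    simpleComponent 𝒢 (∑ x ∈ t, F x) a₀ = ∑ x ∈ t, simpleComponent 𝒢 (F x) a₀ := by
  classical
  induction t using Finset.induction_on with
  | empty => simpa using simpleComponent_zero 𝒢 a₀
  | insert _ _ h ih =>
    rw [Finset.sum_insert h, Finset.sum_insert h, simpleComponent_add, ih]

/-- simple component of a "simple" binomial is itself or zero. -/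
lemma simpleComponent_binomial {s : ℕ} {K : Type*} [Field K] (𝒢 : AddSubgroup (Fin s → ℤ))
    (e₁ e₂ a₀ : Fin s →₀ ℕ) (k : K)
    (h : ((fun i => (e₁ i : ℤ)) - fun i => (e₂ i : ℤ)) ∈ 𝒢) :
    simpleComponent 𝒢 (monomial e₁ k - monomial e₂ k) a₀ = monomial e₁ k - monomial e₂ k ∨
    simpleComponent 𝒢 (monomial e₁ k - monomial e₂ k) a₀ = 0 := by
  classical
  have hiff : (((fun i => (e₁ i : ℤ)) - fun i => (a₀ i : ℤ)) ∈ 𝒢) ↔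
      (((fun i => (e₂ i : ℤ)) - fun i => (a₀ i : ℤ)) ∈ 𝒢) := by
    constructor <;> intro hx
    · have := 𝒢.sub_mem hx h
      convert this using 1
      funext i; simp
    · have := 𝒢.add_mem h hx
      convert this using 1
      funext i; simp
  by_cases h₁ : ((fun i => (e₁ i : ℤ)) - fun i => (a₀ i : ℤ)) ∈ 𝒢
  · left
    apply MvPolynomial.ext; intro m
    rw [coeff_simpleComponent]
    split
    · rfl
    · rename_i hm
      have hm1 : m ≠ e₁ := fun he => hm (he ▸ h₁)
      have hm2 : m ≠ e₂ := fun he => hm (he ▸ (hiff.mp h₁))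
      simp [coeff_sub, coeff_monomial, Ne.symm hm1, Ne.symm hm2]
  · right
    apply MvPolynomial.ext; intro m
    rw [coeff_simpleComponent]
    split
    · rename_i hm
      have hm1 : m ≠ e₁ := fun he => h₁ (he ▸ hm)
      have hm2 : m ≠ e₂ := fun he => (hiff.not.mp h₁) (he ▸ hm)
      simp [coeff_sub, coeff_monomial, Ne.symm hm1, Ne.symm hm2]
    · rfl

theorem simple_components_belong {s r : ℕ} {K : Type*} [Field K]
    (a b : Fin r → Fin s → ℕ) (I : Ideal (MvPolynomial (Fin s) K))
    (hI : I = Ideal.span (Set.range fun j =>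
      monomial (toFs (a j)) (1 : K) - monomial (toFs (b j)) 1))
    (𝒢 : AddSubgroup (Fin s → ℤ))
    (h𝒢 : 𝒢 = AddSubgroup.closure (Set.range fun j => intVec (a j) - intVec (b j)))
    (f : MvPolynomial (Fin s) K) (hf0 : f ≠ 0) (hf : f ∈ I) :
    ∀ a₀ : Fin s →₀ ℕ, simpleComponent 𝒢 f a₀ ∈ I := by
  classical
  intro a₀
  set g : Fin r → MvPolynomial (Fin s) K :=
    fun j => monomial (toFs (a j)) (1 : K) - monomial (toFs (b j)) 1 with hg
  have hge : ∀ j, g j ∈ I := fun j => hI ▸ Ideal.subset_span ⟨j, rfl⟩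
  have hGv : ∀ j, (intVec (a j) - intVec (b j)) ∈ 𝒢 := fun j =>
    h𝒢 ▸ AddSubgroup.subset_closure ⟨j, rfl⟩
  rw [hI] at hf
  obtain ⟨c, hc⟩ := (Finsupp.mem_ideal_span_range_iff_exists_finsupp).mp hf
  have : simpleComponent 𝒢 f a₀ =
      ∑ j ∈ c.support, simpleComponent 𝒢 (c j * g j) a₀ := by
    rw [← simpleComponent_sum]
    congr 1
    rw [← hc]
    rfl
  rw [this]
  apply Ideal.sum_mem
  intro j _
  -- expand c j into monomials
  have hcj : c j * g j = ∑ d ∈ (c j).support, (monomial (d + toFs (a j)) (coeff d (c j))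
      - monomial (d + toFs (b j)) (coeff d (c j))) := by
    conv_lhs => rw [(c j).as_sum]
    rw [Finset.sum_mul]
    apply Finset.sum_congr rfl
    intro d _
    rw [hg]
    simp only [mul_sub, monomial_mul, mul_one]
  rw [hcj, simpleComponent_sum]
  apply Ideal.sum_mem
  intro d _
  have hdiff : ((fun i => ((d + toFs (a j)) i : ℤ)) - fun i => ((d + toFs (b j)) i : ℤ)) ∈ 𝒢 := by
    have : ((fun i => ((d + toFs (a j)) i : ℤ)) - fun i => ((d + toFs (b j)) i : ℤ))
        = intVec (a j) - intVec (b j) := by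
      funext i
      simp [Finsupp.add_apply, toFs]
    rw [this]; exact hGv j
  rcases simpleComponent_binomial 𝒢 (d + toFs (a j)) (d + toFs (b j)) a₀ (coeff d (c j)) hdiff
    with h | h
  · rw [h]
    have : monomial (d + toFs (a j)) (coeff d (c j)) - monomial (d + toFs (b j)) (coeff d (c j))
        = monomial d (coeff d (c j)) * g j := by
      rw [hg]; simp only [mul_sub, monomial_mul, mul_one]
    rw [this]
    exact Ideal.mul_mem_left _ _ (hge j)
  · rw [h]; exact Ideal.zero_mem _
end
end

section
/- Let I ⊂ S be a binomial ideal such that the zero set V(I, t_i) = {0} in affine space 𝔸_K^s for every i = 1,...,s. If 𝔭 is a prime ideal of S containing (I, t_m) for some m, then 𝔭 = (t_1,...,t_s). -/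
open MvPolynomial

noncomputable section

theorem prime_containing_binomial_ideal_and_variable {s : ℕ} {K : Type*} [Field K]
    (I : Ideal (MvPolynomial (Fin s) K)) (G : Set (MvPolynomial (Fin s) K))
    (hG : ∀ g ∈ G, IsBinomial g) (hI : I = Ideal.span G)
    (hV : ∀ i : Fin s, zeroSet (I ⊔ Ideal.span {X i}) = {0})
    (𝔭 : Ideal (MvPolynomial (Fin s) K)) (h𝔭 : 𝔭.IsPrime) (m : Fin s)
    (hm : I ⊔ Ideal.span {X m} ≤ 𝔭) :
    𝔭 = Ideal.span (Set.range (X : Fin s → MvPolynomial (Fin s) K)) := by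
  classical
  set x : Fin s → K := fun i => if X i ∈ 𝔭 then 0 else 1 with hxdef
  -- key dichotomy for monomials
  have key : ∀ a : Fin s → ℕ,
      (monomial (toFs a) (1 : K) ∈ 𝔭 ∧ eval x (monomial (toFs a) (1 : K)) = 0) ∨
      (monomial (toFs a) (1 : K) ∉ 𝔭 ∧ eval x (monomial (toFs a) (1 : K)) = 1) := by
    intro a
    have hmono : monomial (toFs a) (1 : K) =
        ∏ i ∈ (toFs a).support, X i ^ (toFs a) i := by
      rw [monomial_eq, C_1, one_mul, Finsupp.prod]
    have heval : eval x (monomial (toFs a) (1 : K)) =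
        ∏ i ∈ (toFs a).support, x i ^ (toFs a) i := by
      rw [eval_monomial, one_mul, Finsupp.prod]
    by_cases h : ∃ i ∈ (toFs a).support, X i ∈ 𝔭
    · left
      obtain ⟨i, hi, hXi⟩ := h
      constructor
      · rw [hmono, Finset.prod_eq_prod_diff_singleton_mul hi]
        exact Ideal.mul_mem_left _ _
          (Ideal.pow_mem_of_mem _ hXi _ (Nat.pos_of_ne_zero (Finsupp.mem_support_iff.mp hi)))
      · rw [heval]
        refine Finset.prod_eq_zero hi ?_
        have : x i = 0 := by simp [hxdef, hXi]
        rw [this, zero_pow (Finsupp.mem_support_iff.mp hi)]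
    · right
      push_neg at h
      constructor
      · rw [hmono]
        rw [Ideal.IsPrime.prod_mem_iff (hp := h𝔭)]
        rintro ⟨i, hi, hpow⟩
        exact h i hi (h𝔭.mem_of_pow_mem _ hpow)
      · rw [heval]
        refine Finset.prod_eq_one fun i hi => ?_
        have : x i = 1 := by simp [hxdef, h i hi]
        rw [this, one_pow]
  -- binomials in 𝔭 vanish at x
  have hbin : ∀ g, IsBinomial g → g ∈ 𝔭 → eval x g = 0 := by
    rintro g ⟨a, b, rfl⟩ hg
    rcases key a with ⟨haP, haE⟩ | ⟨haP, haE⟩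
    · have hbP : monomial (toFs b) (1 : K) ∈ 𝔭 := by
        have := 𝔭.sub_mem haP hg; simpa using this
      rcases key b with ⟨_, hbE⟩ | ⟨hbP', _⟩
      · simp [haE, hbE]
      · exact absurd hbP hbP'
    · have hbP : monomial (toFs b) (1 : K) ∉ 𝔭 := by
        intro hb
        exact haP (by simpa using 𝔭.add_mem hg hb)
      rcases key b with ⟨hbP', _⟩ | ⟨_, hbE⟩
      · exact absurd hbP' hbP
      · simp [haE, hbE]
  -- x lies in the zero set
  have hIle : I ≤ 𝔭 := le_trans le_sup_left hm
  have hXm : X m ∈ 𝔭 := hm (le_sup_right (a := I) (Ideal.subset_span rfl))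
  have hx : x ∈ zeroSet (I ⊔ Ideal.span {X m}) := by
    intro f hf
    have hspan : I ⊔ Ideal.span {X m} = Ideal.span (G ∪ {X m}) := by
      rw [hI, Ideal.span_union]
    rw [hspan] at hf
    have hle : Ideal.span (G ∪ {X m}) ≤ RingHom.ker (eval x) := by
      rw [Ideal.span_le]
      rintro g (hg | hg)
      · exact RingHom.mem_ker.mpr (hbin g (hG g hg) (hIle (hI ▸ Ideal.subset_span hg)))
      · rcases hg with rfl
        have : eval x (X m) = x m := eval_X m
        have hx0 : x m = 0 := by simp [hxdef, hXm]
        exact RingHom.mem_ker.mpr (by rw [this, hx0])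
    exact RingHom.mem_ker.mp (hle hf)
  have hx0 : x = 0 := by
    have := hV m ▸ hx
    simpa using this
  -- every variable is in 𝔭
  have hXall : ∀ i : Fin s, X i ∈ 𝔭 := by
    intro i
    by_contra hXi
    have : x i = 1 := by simp [hxdef, hXi]
    rw [hx0] at this
    exact one_ne_zero this.symm
  have hle1 : Ideal.span (Set.range (X : Fin s → MvPolynomial (Fin s) K)) ≤ 𝔭 := by
    rw [Ideal.span_le]
    rintro _ ⟨i, rfl⟩
    exact hXall i
  refine le_antisymm ?_ hle1
  intro f hf
  -- f - C (constantCoeff f) is in the span of the variables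
  have hmem : f - C (constantCoeff f) ∈
      Ideal.span (Set.range (X : Fin s → MvPolynomial (Fin s) K)) := by
    rw [← Set.image_univ, mem_ideal_span_X_image]
    intro n hn
    by_contra hcon
    push_neg at hcon
    have hn0 : n = 0 := Finsupp.ext fun i => by simpa using hcon i ⟨⟩
    rw [mem_support_iff, hn0] at hn
    apply hn
    simp [coeff_sub, constantCoeff_eq]
  have hC : C (constantCoeff f) ∈ 𝔭 := by
    have := 𝔭.sub_mem hf (hle1 hmem)
    simpa using this
  have hc0 : constantCoeff f = 0 := by
    by_contra hc
    exact h𝔭.ne_top (𝔭.eq_top_of_isUnit_mem hC ((isUnit_iff_ne_zero.mpr hc).map C))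
  have : f - C (constantCoeff f) = f := by rw [hc0, map_zero, sub_zero]
  rwa [this] at hmem
end
end

section
/- Let 𝓛 ⊂ ℤ^s be a lattice of rank s - 1 which is homogeneous with respect to a positive weight vector ω. Then for any two distinct indices i, k there exist positive integers r_i, r_k with r_i ω_i = r_k ω_k and r_i e_i - r_k e_k ∈ 𝓛. -/
open MvPolynomial

noncomputable section

/-- Coercion `ℤ^s → ℚ^s` as a ℤ-linear map. -/
def coeQ (s : ℕ) : (Fin s → ℤ) →ₗ[ℤ] (Fin s → ℚ) where
  toFun x i := (x i : ℚ)
  map_add' x y := by funext i; simp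
  map_smul' c x := by funext i; push_cast; simp

lemma coeQ_inj (s : ℕ) : Function.Injective (coeQ s) := by
  intro x y h
  funext j
  have := congrFun h j
  simpa [coeQ] using this

lemma exists_nsmul_mem (s : ℕ) (M : Submodule ℤ (Fin s → ℚ)) (x : Fin s → ℚ)
    (hx : x ∈ Submodule.span ℚ (M : Set (Fin s → ℚ))) :
    ∃ n : ℕ, 0 < n ∧ (n : ℤ) • x ∈ M := by
  induction hx using Submodule.span_induction with
  | mem y hy => exact ⟨1, one_pos, by simpa using hy⟩
  | zero => exact ⟨1, one_pos, by simp⟩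
  | add y z _ _ hy hz =>
    obtain ⟨n, hn, hny⟩ := hy
    obtain ⟨m, hm, hmz⟩ := hz
    refine ⟨n * m, Nat.mul_pos hn hm, ?_⟩
    have : ((n * m : ℕ) : ℤ) • (y + z) = (m : ℤ) • ((n:ℤ) • y) + (n : ℤ) • ((m:ℤ) • z) := by
      push_cast; rw [smul_add, smul_smul, smul_smul]; ring_nf
    rw [this]
    exact M.add_mem (M.smul_mem _ hny) (M.smul_mem _ hmz)
  | smul q y _ hy =>
    obtain ⟨n, hn, hny⟩ := hy
    refine ⟨n * q.den, Nat.mul_pos hn q.pos, ?_⟩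
    have : ((n * q.den : ℕ) : ℤ) • (q • y) = q.num • ((n:ℤ) • y) := by
      rw [smul_smul, ← Int.cast_smul_eq_zsmul ℚ, ← Int.cast_smul_eq_zsmul ℚ, smul_smul]
      have hq : q * (q.den : ℚ) = q.num := by exact_mod_cast q.mul_den_eq_num
      congr 1
      push_cast
      rw [mul_assoc, mul_comm (q.den : ℚ) q, hq]
      ring
    rw [this]
    exact M.smul_mem _ hny

theorem homogeneous_rank_lattice_contains_binomial_vectors {s : ℕ}
    (w : Fin s → ℕ) (hw : ∀ i, 0 < w i)
    (𝓛 : Submodule ℤ (Fin s → ℤ)) (hhom : ∀ a ∈ 𝓛, ∑ i, a i * (w i : ℤ) = 0)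
    (hrk : Module.finrank ℤ 𝓛 = s - 1)
    (i k : Fin s) (hik : i ≠ k) :
    ∃ ri rk : ℕ, 0 < ri ∧ 0 < rk ∧ ri * w i = rk * w k ∧
      (ri : ℤ) • Pi.single i (1 : ℤ) - (rk : ℤ) • Pi.single k (1 : ℤ) ∈ 𝓛 := by
  classical
  -- the weight functional on ℚ^s
  set φ : (Fin s → ℚ) →ₗ[ℚ] ℚ :=
    { toFun := fun x => ∑ j, x j * (w j : ℚ)
      map_add' := by intros x y; simp [add_mul, Finset.sum_add_distrib]
      map_smul' := by intros c x; simp [Finset.mul_sum, mul_assoc] } with hφdef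
  have hφsingle : ∀ (j : Fin s) (c : ℚ), φ (c • (Pi.single j 1 : Fin s → ℚ)) = c * w j := by
    intro j c
    simp only [hφdef, LinearMap.coe_mk, AddHom.coe_mk, Pi.smul_apply, Pi.single_apply,
      smul_eq_mul, mul_ite, mul_one, mul_zero, ite_mul, zero_mul]
    rw [Finset.sum_eq_single j] <;> simp +contextual
  have hφne : φ ≠ 0 := by
    intro h
    have h2 := hφsingle i 1
    rw [h] at h2
    simp at h2
    exact (hw i).ne' (by exact_mod_cast h2.symm)
  -- basis of the lattice, mapped into ℚ^s
  let b := (Module.finBasis ℤ 𝓛).reindex (finCongr hrk)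
  let f : 𝓛 →ₗ[ℤ] (Fin s → ℚ) := (coeQ s).comp 𝓛.subtype
  have hfinj : Function.Injective f := (coeQ_inj s).comp 𝓛.injective_subtype
  let v : Fin (s-1) → (Fin s → ℚ) := fun j => f (b j)
  have hli : LinearIndependent ℤ v :=
    b.linearIndependent.map' f (LinearMap.ker_eq_bot.mpr hfinj)
  have hliQ : LinearIndependent ℚ v := (LinearIndependent.iff_fractionRing ℤ ℚ).mp hli
  have hspan_le : Submodule.span ℚ (Set.range v) ≤ LinearMap.ker φ := by
    rw [Submodule.span_le]
    rintro _ ⟨j, rfl⟩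
    have hm := (b j).2
    simp only [SetLike.mem_coe, LinearMap.mem_ker, hφdef, LinearMap.coe_mk, AddHom.coe_mk, v, f,
      LinearMap.comp_apply, Submodule.coe_subtype, coeQ]
    exact_mod_cast hhom _ hm
  have h1 : Module.finrank ℚ (Submodule.span ℚ (Set.range v)) = s - 1 := by
    rw [finrank_span_eq_card hliQ]; simp
  have h2 : Module.finrank ℚ (LinearMap.ker φ) + 1 = s := by
    have := Module.Dual.finrank_ker_add_one_of_ne_zero (f := φ) hφne
    simpa using this
  have heq : Submodule.span ℚ (Set.range v) = LinearMap.ker φ :=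
    Submodule.eq_of_le_of_finrank_le hspan_le (by omega)
  -- the target rational vector
  set vq : Fin s → ℚ := (w k : ℚ) • (Pi.single i 1 : Fin s → ℚ) - (w i : ℚ) • (Pi.single k 1 : Fin s → ℚ) with hvq
  have hφvq : vq ∈ LinearMap.ker φ := by
    rw [LinearMap.mem_ker, hvq, map_sub, hφsingle, hφsingle]
    ring
  set M : Submodule ℤ (Fin s → ℚ) := 𝓛.map (coeQ s) with hM
  have hle2 : Submodule.span ℚ (Set.range v) ≤ Submodule.span ℚ (M : Set (Fin s → ℚ)) := by
    apply Submodule.span_le.mpr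
    rintro _ ⟨j, rfl⟩
    exact Submodule.subset_span ⟨(b j : Fin s → ℤ), (b j).2, rfl⟩
  have hvqM : vq ∈ Submodule.span ℚ (M : Set (Fin s → ℚ)) := hle2 (heq ▸ hφvq)
  obtain ⟨n, hn, hnvq⟩ := exists_nsmul_mem s M vq hvqM
  obtain ⟨a, ha𝓛, haeq⟩ := hnvq
  refine ⟨n * w k, n * w i, Nat.mul_pos hn (hw k), Nat.mul_pos hn (hw i), by ring, ?_⟩
  have key : coeQ s (((n * w k : ℕ) : ℤ) • Pi.single i 1 - ((n * w i : ℕ) : ℤ) • Pi.single k 1)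
      = (n : ℤ) • vq := by
    funext j
    have hsingle : ∀ (m : Fin s) (c : ℤ), (c • (Pi.single m 1 : Fin s → ℤ)) j
        = if j = m then c else 0 := by
      intro m c; simp [Pi.single_apply]
    simp only [coeQ, LinearMap.coe_mk, AddHom.coe_mk, Pi.sub_apply, hsingle, Pi.smul_apply,
      hvq, Pi.single_apply, smul_eq_mul]
    by_cases hji : j = i <;> by_cases hjk : j = k
    · exact absurd (hji ▸ hjk : (i : Fin s) = k) hik
    all_goals simp only [hji, hjk, if_true, if_false, if_pos rfl]
    all_goals push_cast [zsmul_eq_mul]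
    all_goals simp [hji, hjk, hik, Ne.symm hik]
  have haval : a = ((n * w k : ℕ) : ℤ) • Pi.single i 1 - ((n * w i : ℕ) : ℤ) • Pi.single k 1 :=
    coeQ_inj s (haeq.trans key.symm)
  rw [← haval]
  exact ha𝓛
end
end
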